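/- Define for integers r ≥ 0, k ≥ 1 and real ω ∈ (0,1): h(k) = Σ_{ι=1}^{r+1} [1/(ι-1)!] (∏_{j=-ι+1}^{-1}(k+j)) (1-ω)^{ι-1} ω^{k-ι}. Then h(k+1) - h(k) = -[1/r!] (∏_{j=-r}^{-1}(k+j)) (1-ω)^{r+1} ω^{k-r-1}, which is strictly negative for all integers k ≥ r+1. Hence h is strictly decreasing in k for k ≥ r+1. -/
import Mathlib


open Finset

private lemma prod_eq_choose (k i : ℕ) (hik : i ≤ k) :
    (1 / (Nat.factorial i : ℝ)) * (∏ j ∈ Finset.range i, ((k : ℝ) - (j + 1)))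
      = ((k - 1).choose i : ℝ) := by
  have hprod : (∏ j ∈ Finset.range i, ((k : ℝ) - (j + 1)))
      = ((Nat.descFactorial (k - 1) i : ℕ) : ℝ) := by
    rw [Nat.descFactorial_eq_prod_range, Nat.cast_prod]
    refine Finset.prod_congr rfl fun j hj => ?_
    have hj' : j < i := Finset.mem_range.mp hj
    have h1 : j ≤ k - 1 := by omega
    have h2 : 1 ≤ k := by omega
    rw [Nat.cast_sub h1, Nat.cast_sub h2]
    push_cast
    ring
  rw [hprod, Nat.descFactorial_eq_factorial_mul_choose]
  have hfac : (Nat.factorial i : ℝ) ≠ 0 := by positivity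
  push_cast
  field_simp

private lemma keyF (ω : ℝ) : ∀ r n : ℕ, r ≤ n →
    (∑ i ∈ Finset.range (r + 1), ((n + 1).choose i : ℝ) * (1 - ω) ^ i * ω ^ (n + 1 - i))
      - (∑ i ∈ Finset.range (r + 1), (n.choose i : ℝ) * (1 - ω) ^ i * ω ^ (n - i))
    = -((n.choose r : ℝ) * (1 - ω) ^ (r + 1) * ω ^ (n - r)) := by
  intro r
  induction r with
  | zero =>
      intro n hn
      rw [Finset.sum_range_one, Finset.sum_range_one]
      simp only [Nat.choose_zero_right, Nat.cast_one, pow_zero, Nat.sub_zero, one_mul, mul_one]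
      rw [pow_succ]
      ring
  | succ r ih =>
      intro n hn
      have ih' := ih n (by omega)
      rw [Finset.sum_range_succ (fun i => (((n + 1).choose i : ℕ) : ℝ) * (1 - ω) ^ i * ω ^ (n + 1 - i)) (r + 1),
        Finset.sum_range_succ (fun i => ((n.choose i : ℕ) : ℝ) * (1 - ω) ^ i * ω ^ (n - i)) (r + 1)]
      have e1 : n + 1 - (r + 1) = n - (r + 1) + 1 := by omega
      have e2 : n - r = n - (r + 1) + 1 := by omega
      rw [e1]
      rw [e2] at ih'
      have hc : (((n + 1).choose (r + 1) : ℕ) : ℝ)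
          = (n.choose r : ℝ) + (n.choose (r + 1) : ℝ) := by
        rw [Nat.choose_succ_succ]; push_cast; ring
      rw [hc]
      rw [pow_succ (1 - ω) (r + 1), pow_succ ω (n - (r + 1))]
      linear_combination ih'

/-- For `h(k) = Σ_{ι=1}^{r+1} (1/(ι-1)!) (∏_{j=-ι+1}^{-1}(k+j)) (1-ω)^{ι-1} ω^{k-ι}`,
one has `h(k+1) - h(k) = -(1/r!) (∏_{j=-r}^{-1}(k+j)) (1-ω)^{r+1} ω^{k-r-1} < 0`
for all `k ≥ r+1`; hence `h` is strictly decreasing in `k` for `k ≥ r+1`. -/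
theorem stmt10 (r : ℕ) (ω : ℝ) (hω : 0 < ω) (hω1 : ω < 1)
    (h : ℕ → ℝ)
    (hdef : ∀ k : ℕ, h k =
      ∑ ι ∈ Finset.Icc 1 (r + 1),
        (1 / (Nat.factorial (ι - 1) : ℝ)) *
          (∏ j ∈ Finset.range (ι - 1), ((k : ℝ) - (j + 1))) *
          (1 - ω) ^ (ι - 1) * ω ^ (k - ι)) :
    ∀ k : ℕ, r + 1 ≤ k →
      (h (k + 1) - h k =
        -((1 / (Nat.factorial r : ℝ)) *
            (∏ j ∈ Finset.range r, ((k : ℝ) - (j + 1))) *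
            (1 - ω) ^ (r + 1) * ω ^ (k - r - 1))) ∧
      h (k + 1) - h k < 0 ∧ h (k + 1) < h k := by
  have hrep : ∀ k : ℕ, r + 1 ≤ k →
      h k = ∑ i ∈ Finset.range (r + 1),
        (((k - 1).choose i : ℕ) : ℝ) * (1 - ω) ^ i * ω ^ (k - 1 - i) := by
    intro k hk
    rw [hdef k, ← Finset.Ico_add_one_right_eq_Icc, Finset.sum_Ico_eq_sum_range]
    have hr : r + 1 + 1 - 1 = r + 1 := by omega
    rw [hr]
    refine Finset.sum_congr rfl fun i hi => ?_
    have hi' : i < r + 1 := Finset.mem_range.mp hi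
    have e1 : 1 + i - 1 = i := by omega
    have e2 : k - (1 + i) = k - 1 - i := by omega
    rw [e1, e2, prod_eq_choose k i (by omega)]
  intro k hk
  have hA : (1 / (Nat.factorial r : ℝ)) * (∏ j ∈ Finset.range r, ((k : ℝ) - (j + 1)))
      = (((k - 1).choose r : ℕ) : ℝ) := prod_eq_choose k r (by omega)
  have hdiff : h (k + 1) - h k =
      -((((k - 1).choose r : ℕ) : ℝ) * (1 - ω) ^ (r + 1) * ω ^ (k - 1 - r)) := by
    rw [hrep k hk, hrep (k + 1) (by omega)]
    have e3 : k + 1 - 1 = (k - 1) + 1 := by omega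
    have e4 : (k - 1) + 1 = k := by omega
    have := keyF ω r (k - 1) (by omega)
    rw [e4] at this
    simpa using this
  have e5 : k - r - 1 = k - 1 - r := by omega
  refine ⟨by rw [hdiff, hA, e5], ?_, ?_⟩
  all_goals {
    have hC : (0 : ℝ) < (((k - 1).choose r : ℕ) : ℝ) := by
      exact_mod_cast Nat.choose_pos (by omega : r ≤ k - 1)
    have h1 : (0 : ℝ) < (1 - ω) ^ (r + 1) := pow_pos (by linarith) _
    have h2 : (0 : ℝ) < ω ^ (k - 1 - r) := pow_pos hω _
    have hpos : (0 : ℝ) < (((k - 1).choose r : ℕ) : ℝ) * (1 - ω) ^ (r + 1) * ω ^ (k - 1 - r) :=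
      mul_pos (mul_pos hC h1) h2
    linarith [hdiff] }
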